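/- If {Λ_j} is a (C,C')-controlled g-Bessel sequence with bound B, then the synthesis operator T({g_j}) = Σ_j (CC')^{1/2} Λ_j* g_j, defined on the ℓ²-direct sum of the H_j, is well defined (the series converges) and bounded with ‖T‖ ≤ √B. -/

import Mathlib

set_option maxHeartbeats 1600000

open scoped RealInnerProductSpace ENNReal NNReal
open ContinuousLinearMap

lemma pos_inner_mul_inner' {H : Type*} [NormedAddCommGroup H] [InnerProductSpace ℝ H]
    [CompleteSpace H] (R : H →L[ℝ] H) (hR : R.IsPositive) (u v : H) :
    ⟪R u, v⟫ ^ 2 ≤ ⟪R u, u⟫ * ⟪R v, v⟫ := by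
  have hsym := hR.isSelfAdjoint.isSymmetric
  have h : ∀ t : ℝ, 0 ≤ ⟪R v, v⟫ * (t * t) + (2 * ⟪R u, v⟫) * t + ⟪R u, u⟫ := by
    intro t
    have h0 : 0 ≤ ⟪R (u + t • v), u + t • v⟫ := by
      simpa using hR.inner_nonneg_left (u + t • v)
    have hvu : ⟪R v, u⟫ = ⟪R u, v⟫ := (real_inner_comm _ _).trans (hsym u v).symm
    have hexp : ⟪R (u + t • v), u + t • v⟫
        = ⟪R v, v⟫ * (t * t) + (2 * ⟪R u, v⟫) * t + ⟪R u, u⟫ := by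
      simp only [map_add, map_smul, inner_add_left, inner_add_right,
        real_inner_smul_left, real_inner_smul_right, hvu]
      ring
    linarith [hexp ▸ h0]
  have hd := discrim_le_zero h
  rw [discrim] at hd
  nlinarith [hd]

lemma anticomm_eq_zero' {H : Type*} [NormedAddCommGroup H] [InnerProductSpace ℝ H]
    [CompleteSpace H] (R A : H →L[ℝ] H) {c : ℝ} (hc : 0 < c)
    (hlow : ∀ x, c * ‖x‖ ^ 2 ≤ ⟪R x, x⟫)
    (hAadj : ContinuousLinearMap.adjoint A = -A)
    (hanti : ∀ x, R (A x) = -(A (R x))) : A = 0 := by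
  by_contra hA0
  have ha : 0 < ‖A‖ := by
    rcases (norm_nonneg A).lt_or_eq with h | h
    · exact h
    · exact absurd ((opNorm_zero_iff A).mp h.symm) hA0
  set a : ℝ := ‖A‖ with ha_def
  have key : ∀ ε : ℝ, 0 < ε → ε < a → c * (a - ε) ^ 2 ≤ (‖R‖ + 1) * Real.sqrt (4 * a ^ 3 * ε) := by
    intro ε hε hεa
    obtain ⟨x, hx1, hx2⟩ := A.exists_lt_apply_of_lt_opNorm (show a - ε < ‖A‖ by linarith)
    have hxle : ‖x‖ ≤ 1 := hx1.le
    have hAx_le : ‖A x‖ ≤ a * ‖x‖ := A.le_opNorm x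
    have hAx_le' : ‖A x‖ ≤ a := by nlinarith
    have hax : a - ε ≤ a * ‖x‖ := le_trans hx2.le hAx_le
    set u : H := -(A (A x)) with hu
    have hRAx : R (A x) = -(A (R x)) := hanti x
    have f1 : ⟪R x, u⟫ ≤ 0 := by
      have e1 : ⟪R x, A (A x)⟫ = ⟪R (A x), A x⟫ := by
        have h := ContinuousLinearMap.adjoint_inner_left A (A x) (R x)
        rw [hAadj] at h
        simp only [ContinuousLinearMap.neg_apply, inner_neg_left] at h
        rw [← h, hRAx, inner_neg_left]
      have e2 : 0 ≤ ⟪R (A x), A x⟫ := le_trans (by positivity) (hlow (A x))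
      have e3 : ⟪R x, u⟫ = -⟪R x, A (A x)⟫ := by rw [hu, inner_neg_right]
      rw [e3, e1]; linarith
    have f2 : ⟪u, x⟫ = ‖A x‖ ^ 2 := by
      have e1 : ⟪A (A x), x⟫ = ⟪A x, ContinuousLinearMap.adjoint A x⟫ :=
        (ContinuousLinearMap.adjoint_inner_right A (A x) x).symm
      rw [hu, inner_neg_left, e1, hAadj]
      simp only [ContinuousLinearMap.neg_apply, inner_neg_right]
      rw [neg_neg, real_inner_self_eq_norm_sq]
    have f3 : ‖u‖ ≤ a ^ 2 := by
      rw [hu, norm_neg]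
      calc ‖A (A x)‖ ≤ a * ‖A x‖ := A.le_opNorm _
      _ ≤ a ^ 2 := by nlinarith
    have hexp : ‖u - (a ^ 2) • x‖ ^ 2
        = ‖u‖ ^ 2 - 2 * (a ^ 2 * ⟪u, x⟫) + (a ^ 2) ^ 2 * ‖x‖ ^ 2 := by
      rw [norm_sub_sq_real, real_inner_smul_right, norm_smul, Real.norm_eq_abs,
        abs_of_nonneg (sq_nonneg a)]
      ring
    have hAx2 : (a - ε) ^ 2 ≤ ‖A x‖ ^ 2 := by nlinarith [hx2.le]
    have h1 : ‖u‖ ^ 2 ≤ (a ^ 2) ^ 2 := by nlinarith [norm_nonneg u]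
    have hx2' : ‖x‖ ^ 2 ≤ 1 := by nlinarith [norm_nonneg x]
    have h2 : (a ^ 2) ^ 2 * ‖x‖ ^ 2 ≤ (a ^ 2) ^ 2 := by
      nlinarith [mul_le_mul_of_nonneg_left hx2' (sq_nonneg (a ^ 2))]
    have h3 : 2 * a ^ 2 * (a - ε) ^ 2 ≤ 2 * a ^ 2 * ‖A x‖ ^ 2 := by nlinarith [sq_nonneg a]
    have f4 : ‖u - (a ^ 2) • x‖ ^ 2 ≤ 4 * a ^ 3 * ε := by
      rw [hexp, f2]
      nlinarith [sq_nonneg (a * ε)]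
    have f4' : ‖u - (a ^ 2) • x‖ ≤ Real.sqrt (4 * a ^ 3 * ε) := by
      rw [show ‖u - (a ^ 2) • x‖ = Real.sqrt (‖u - (a ^ 2) • x‖ ^ 2) from
        (Real.sqrt_sq (norm_nonneg _)).symm]
      exact Real.sqrt_le_sqrt f4
    have f5 : c * (a - ε) ^ 2 ≤ ⟪R x, (a ^ 2) • x⟫ := by
      rw [real_inner_smul_right]
      have h8 : (a - ε) ^ 2 ≤ (a * ‖x‖) ^ 2 := by nlinarith
      nlinarith [mul_le_mul_of_nonneg_left (hlow x) (sq_nonneg a),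
        mul_le_mul_of_nonneg_left h8 hc.le]
    have hsplit : ⟪R x, u⟫ = ⟪R x, (a ^ 2) • x⟫ + ⟪R x, u - (a ^ 2) • x⟫ := by
      rw [inner_sub_right]; ring
    have hRx : ‖R x‖ ≤ ‖R‖ + 1 := by
      calc ‖R x‖ ≤ ‖R‖ * ‖x‖ := R.le_opNorm x
      _ ≤ ‖R‖ + 1 := by nlinarith [norm_nonneg R]
    have h7 : ‖R x‖ * ‖u - (a ^ 2) • x‖ ≤ (‖R‖ + 1) * Real.sqrt (4 * a ^ 3 * ε) :=
      mul_le_mul hRx f4' (norm_nonneg _) (by linarith [norm_nonneg R])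
    have h6 : -((‖R‖ + 1) * Real.sqrt (4 * a ^ 3 * ε)) ≤ ⟪R x, u - (a ^ 2) • x⟫ := by
      have habs := abs_real_inner_le_norm (R x) (u - (a ^ 2) • x)
      have := neg_abs_le ⟪R x, u - (a ^ 2) • x⟫
      linarith
    linarith
  have hlim1 : Filter.Tendsto (fun ε : ℝ => c * (a - ε) ^ 2) (nhdsWithin 0 (Set.Ioi 0))
      (nhds (c * a ^ 2)) := by
    have hcont : Continuous fun ε : ℝ => c * (a - ε) ^ 2 := by fun_prop
    have := (hcont.tendsto 0).mono_left (nhdsWithin_le_nhds (s := Set.Ioi (0:ℝ)))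
    simpa using this
  have hlim2 : Filter.Tendsto (fun ε : ℝ => (‖R‖ + 1) * Real.sqrt (4 * a ^ 3 * ε))
      (nhdsWithin 0 (Set.Ioi 0)) (nhds 0) := by
    have hcont : Continuous fun ε : ℝ => (‖R‖ + 1) * Real.sqrt (4 * a ^ 3 * ε) :=
      continuous_const.mul (Real.continuous_sqrt.comp (continuous_const.mul continuous_id))
    have := (hcont.tendsto 0).mono_left (nhdsWithin_le_nhds (s := Set.Ioi (0:ℝ)))
    simpa using this
  have hfinal : c * a ^ 2 ≤ 0 := by
    refine le_of_tendsto_of_tendsto hlim1 hlim2 ?_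
    filter_upwards [Ioo_mem_nhdsGT_of_mem (show (0:ℝ) ∈ Set.Ico 0 a from ⟨le_refl 0, ha⟩)]
      with ε hε
    exact key ε hε.1 hε.2
  nlinarith [mul_pos hc (pow_pos ha 2)]

/-- The synthesis operator of a (C,C')-controlled g-Bessel sequence with bound B
is well defined and bounded with norm at most √B. -/
theorem synthesis_operator_well_defined_and_bounded
    {H : Type*} [NormedAddCommGroup H] [InnerProductSpace ℝ H] [CompleteSpace H]
    {ι : Type*} {G : ι → Type*} [∀ i, NormedAddCommGroup (G i)]
    [∀ i, InnerProductSpace ℝ (G i)] [∀ i, CompleteSpace (G i)]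
    (Λ : ∀ i, H →L[ℝ] G i) (C C' : H →L[ℝ] H)
    (hCpos : C.IsPositive) (hC'pos : C'.IsPositive)
    (hCbij : Function.Bijective C) (hC'bij : Function.Bijective C')
    (hcomm : C ∘L C' = C' ∘L C)
    (hcommC : ∀ i, C ∘L ((Λ i).adjoint ∘L Λ i) = ((Λ i).adjoint ∘L Λ i) ∘L C)
    (hcommC' : ∀ i, C' ∘L ((Λ i).adjoint ∘L Λ i) = ((Λ i).adjoint ∘L Λ i) ∘L C')
    (R : H →L[ℝ] H) (hRpos : R.IsPositive) (hRsq : R ∘L R = C ∘L C')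
    (B : ℝ) (hB : 0 < B)
    (hbessel : ∀ f : H, (Summable fun i => ⟪(Λ i) (C f), (Λ i) (C' f)⟫) ∧
      ∑' i, ⟪(Λ i) (C f), (Λ i) (C' f)⟫ ≤ B * ⟪f, f⟫) :
    ∃ T : lp G 2 →L[ℝ] H,
      (∀ g : lp G 2, HasSum (fun i => R ((Λ i).adjoint (g i))) (T g)) ∧
      ‖T‖ ≤ Real.sqrt B := by
  classical
  have hRsym0 := hRpos.isSelfAdjoint.isSymmetric
  have hRsym : ∀ x y : H, ⟪R x, y⟫ = ⟪x, R y⟫ := fun x y => hRsym0 x y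
  have hRR : ∀ y, R (R y) = C (C' y) := fun y => by
    have := DFunLike.congr_fun hRsq y
    simpa using this
  set K : ∀ i, H →L[ℝ] H := fun i => (Λ i).adjoint ∘L Λ i with hKdef
  -- S := C ∘L C' is bijective
  have hSbij : Function.Bijective (C ∘L C') := by
    have hco : ⇑(C ∘L C') = ⇑C ∘ ⇑C' := by ext y; simp
    rw [hco]
    exact hCbij.comp hC'bij
  let e : H ≃L[ℝ] H := ContinuousLinearEquiv.ofBijective (C ∘L C')
    (LinearMap.ker_eq_bot.mpr hSbij.injective)
    (LinearMap.range_eq_top.mpr hSbij.surjective)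
  have hxSx : ∀ x : H, ‖x‖ ≤ ‖(e.symm : H →L[ℝ] H)‖ * ‖(C ∘L C') x‖ := by
    intro x
    conv_lhs => rw [← e.symm_apply_apply x]
    exact (e.symm : H →L[ℝ] H).le_opNorm (e x)
  set d : ℝ := (‖(e.symm : H →L[ℝ] H)‖ + 1) * (‖R‖ + 1) with hd
  have hdpos : 0 < d := by positivity
  have hRlow : ∀ x, ‖x‖ ≤ d * ‖R x‖ := by
    intro x
    have h1 := hxSx x
    have h2 : ‖(C ∘L C') x‖ = ‖R (R x)‖ := by
      rw [show (C ∘L C') x = R (R x) from by simp [hRR x]]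
    have h3 : ‖R (R x)‖ ≤ ‖R‖ * ‖R x‖ := R.le_opNorm _
    have h4 : ‖(e.symm : H →L[ℝ] H)‖ * (‖R‖ * ‖R x‖) ≤ d * ‖R x‖ := by
      rw [hd]
      nlinarith [norm_nonneg (e.symm : H →L[ℝ] H), norm_nonneg R, norm_nonneg (R x)]
    calc ‖x‖ ≤ ‖(e.symm : H →L[ℝ] H)‖ * ‖(C ∘L C') x‖ := h1
    _ = ‖(e.symm : H →L[ℝ] H)‖ * ‖R (R x)‖ := by rw [h2]
    _ ≤ ‖(e.symm : H →L[ℝ] H)‖ * (‖R‖ * ‖R x‖) := by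
        nlinarith [norm_nonneg (e.symm : H →L[ℝ] H)]
    _ ≤ d * ‖R x‖ := h4
  set c : ℝ := 1 / (d ^ 2 * (‖R‖ + 1)) with hc
  have hcpos : 0 < c := by positivity
  have hlow : ∀ x, c * ‖x‖ ^ 2 ≤ ⟪R x, x⟫ := by
    intro x
    have hcs := pos_inner_mul_inner' R hRpos x (R x)
    have h1 : ⟪R x, R x⟫ = ‖R x‖ ^ 2 := real_inner_self_eq_norm_sq _
    have h2 : ⟪R (R x), R x⟫ ≤ (‖R‖ + 1) * ‖R x‖ ^ 2 := by
      have ha := real_inner_le_norm (R (R x)) (R x)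
      have hb := R.le_opNorm (R x)
      nlinarith [norm_nonneg (R x), norm_nonneg R, norm_nonneg (R (R x))]
    have h0 : 0 ≤ ⟪R x, x⟫ := by simpa using hRpos.inner_nonneg_left x
    by_cases hz : ‖R x‖ = 0
    · have hx0 : ‖x‖ = 0 := le_antisymm (by simpa [hz] using hRlow x) (norm_nonneg x)
      rw [hx0]
      simpa using h0
    · have hzpos : 0 < ‖R x‖ := lt_of_le_of_ne (norm_nonneg _) (Ne.symm hz)
      have h3 : ‖R x‖ ^ 2 ≤ ⟪R x, x⟫ * (‖R‖ + 1) := by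
        have h4 : ‖R x‖ ^ 2 * ‖R x‖ ^ 2 ≤ (⟪R x, x⟫ * (‖R‖ + 1)) * ‖R x‖ ^ 2 := by
          nlinarith [hcs, h2, h0]
        have h5 : (0:ℝ) < ‖R x‖ ^ 2 := by positivity
        nlinarith [h4, h5]
      have h5 : ‖x‖ ^ 2 ≤ d ^ 2 * ‖R x‖ ^ 2 := by nlinarith [hRlow x, norm_nonneg x, hdpos]
      rw [hc, div_mul_eq_mul_div, one_mul, div_le_iff₀ (by positivity)]
      nlinarith [mul_le_mul_of_nonneg_left h3 (sq_nonneg d)]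
  -- self-adjointness of K i
  have hKsa : ∀ i, IsSelfAdjoint (K i) := by
    intro i
    rw [hKdef]
    rw [isSelfAdjoint_iff']
    simp [adjoint_comp, adjoint_adjoint]
  -- (C∘C') commutes with K i
  have hSK : ∀ i, (C ∘L C') ∘L K i = K i ∘L (C ∘L C') := by
    intro i
    rw [comp_assoc, hcommC' i, ← comp_assoc, hcommC i, comp_assoc]
  have hSKptw : ∀ i x, C (C' (K i x)) = K i (C (C' x)) := by
    intro i x
    have := DFunLike.congr_fun (hSK i) x
    simpa using this
  -- R commutes with K i
  have hKR : ∀ i, K i ∘L R = R ∘L K i := by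
    intro i
    have hKadj : ContinuousLinearMap.adjoint (K i) = K i := (hKsa i).adjoint_eq
    have hRadj : ContinuousLinearMap.adjoint R = R := hRpos.isSelfAdjoint.adjoint_eq
    have hAadj : ContinuousLinearMap.adjoint (K i ∘L R - R ∘L K i)
        = -(K i ∘L R - R ∘L K i) := by
      rw [map_sub, ContinuousLinearMap.adjoint_comp (K i) R,
        ContinuousLinearMap.adjoint_comp R (K i), hKadj, hRadj]
      abel
    have hanti : ∀ x, R ((K i ∘L R - R ∘L K i) x) = -((K i ∘L R - R ∘L K i) (R x)) := by
      intro x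
      simp only [ContinuousLinearMap.sub_apply, ContinuousLinearMap.comp_apply, map_sub]
      rw [hRR (K i x), hRR x, hSKptw i x]
      abel
    have h0 := anticomm_eq_zero' R (K i ∘L R - R ∘L K i) hcpos hlow hAadj hanti
    exact sub_eq_zero.mp h0
  have hKRptw : ∀ i x, K i (R x) = R (K i x) := by
    intro i x
    have := DFunLike.congr_fun (hKR i) x
    simpa using this
  -- key pointwise identity
  have key : ∀ i (f : H), ⟪(Λ i) (C f), (Λ i) (C' f)⟫ = ‖(Λ i) (R f)‖ ^ 2 := by
    intro i f
    have hCsym0 := hCpos.isSelfAdjoint.isSymmetric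
    have hCsym : ∀ x y : H, ⟪C x, y⟫ = ⟪x, C y⟫ := fun x y => hCsym0 x y
    have e1 : ⟪(Λ i) (C f), (Λ i) (C' f)⟫ = ⟪C f, K i (C' f)⟫ :=
      (ContinuousLinearMap.adjoint_inner_right (Λ i) (C f) ((Λ i) (C' f))).symm
    have e2 : ⟪(Λ i) (R f), (Λ i) (R f)⟫ = ⟪R f, K i (R f)⟫ :=
      (ContinuousLinearMap.adjoint_inner_right (Λ i) (R f) ((Λ i) (R f))).symm
    have e3 : ⟪C f, K i (C' f)⟫ = ⟪f, C (K i (C' f))⟫ := hCsym f (K i (C' f))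
    have e4 : C (K i (C' f)) = K i (C (C' f)) := by
      have := DFunLike.congr_fun (hcommC i) (C' f)
      simpa [hKdef] using this
    have e5 : ⟪R f, K i (R f)⟫ = ⟪f, R (K i (R f))⟫ := hRsym f (K i (R f))
    have e6 : R (K i (R f)) = K i (R (R f)) := (hKRptw i (R f)).symm
    rw [← real_inner_self_eq_norm_sq, e1, e2, e3, e5, e4, e6, hRR f]
  -- Bessel condition in terms of R
  have hsum : ∀ f : H, Summable (fun i => ‖(Λ i) (R f)‖ ^ 2)
      ∧ ∑' i, ‖(Λ i) (R f)‖ ^ 2 ≤ B * ‖f‖ ^ 2 := by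
    intro f
    have h := hbessel f
    have hfun : (fun i => ⟪(Λ i) (C f), (Λ i) (C' f)⟫) = fun i => ‖(Λ i) (R f)‖ ^ 2 :=
      funext fun i => key i f
    have hff : ⟪f, f⟫ = ‖f‖ ^ 2 := real_inner_self_eq_norm_sq f
    refine ⟨hfun ▸ h.1, ?_⟩
    have := h.2
    rw [hfun, hff] at this
    exact this
  -- finite bound
  have finbound : ∀ (g : ∀ i, G i) (F : Finset ι),
      ‖∑ i ∈ F, R ((Λ i).adjoint (g i))‖
        ≤ Real.sqrt B * Real.sqrt (∑ i ∈ F, ‖g i‖ ^ 2) := by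
    intro g F
    set v := ∑ i ∈ F, R ((Λ i).adjoint (g i)) with hv
    have hv2 : ‖v‖ ^ 2 = ∑ i ∈ F, ⟪g i, (Λ i) (R v)⟫ := by
      rw [← real_inner_self_eq_norm_sq, hv, sum_inner]
      refine Finset.sum_congr rfl fun i _ => ?_
      rw [hRsym ((Λ i).adjoint (g i)) v]
      exact ContinuousLinearMap.adjoint_inner_left (Λ i) (R v) (g i)
    have hcs : (∑ i ∈ F, ⟪g i, (Λ i) (R v)⟫)
        ≤ Real.sqrt (∑ i ∈ F, ‖g i‖ ^ 2) * Real.sqrt (∑ i ∈ F, ‖(Λ i) (R v)‖ ^ 2) := by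
      have h1 : ∑ i ∈ F, ⟪g i, (Λ i) (R v)⟫ ≤ ∑ i ∈ F, ‖g i‖ * ‖(Λ i) (R v)‖ :=
        Finset.sum_le_sum fun i _ => real_inner_le_norm _ _
      have h2 := Finset.sum_mul_sq_le_sq_mul_sq F (fun i => ‖g i‖) (fun i => ‖(Λ i) (R v)‖)
      have h3 : ∑ i ∈ F, ‖g i‖ * ‖(Λ i) (R v)‖
          ≤ Real.sqrt ((∑ i ∈ F, ‖g i‖ ^ 2) * ∑ i ∈ F, ‖(Λ i) (R v)‖ ^ 2) := by
        rw [show (∑ i ∈ F, ‖g i‖ * ‖(Λ i) (R v)‖)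
            = Real.sqrt ((∑ i ∈ F, ‖g i‖ * ‖(Λ i) (R v)‖) ^ 2) from
          (Real.sqrt_sq (Finset.sum_nonneg fun i _ => by positivity)).symm]
        exact Real.sqrt_le_sqrt h2
      rw [← Real.sqrt_mul (Finset.sum_nonneg fun i _ => by positivity)]
      linarith
    have h4 : ∑ i ∈ F, ‖(Λ i) (R v)‖ ^ 2 ≤ B * ‖v‖ ^ 2 :=
      le_trans (Summable.sum_le_tsum F (fun i _ => by positivity) (hsum v).1) (hsum v).2
    have h6 : Real.sqrt (∑ i ∈ F, ‖(Λ i) (R v)‖ ^ 2) ≤ Real.sqrt B * ‖v‖ := by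
      rw [show Real.sqrt B * ‖v‖ = Real.sqrt (B * ‖v‖ ^ 2) from by
        rw [Real.sqrt_mul hB.le, Real.sqrt_sq (norm_nonneg v)]]
      exact Real.sqrt_le_sqrt h4
    have h5 : ‖v‖ ^ 2 ≤ Real.sqrt (∑ i ∈ F, ‖g i‖ ^ 2) * (Real.sqrt B * ‖v‖) := by
      calc ‖v‖ ^ 2 = ∑ i ∈ F, ⟪g i, (Λ i) (R v)⟫ := hv2
      _ ≤ Real.sqrt (∑ i ∈ F, ‖g i‖ ^ 2) * Real.sqrt (∑ i ∈ F, ‖(Λ i) (R v)‖ ^ 2) := hcs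
      _ ≤ Real.sqrt (∑ i ∈ F, ‖g i‖ ^ 2) * (Real.sqrt B * ‖v‖) :=
          mul_le_mul_of_nonneg_left h6 (Real.sqrt_nonneg _)
    rcases (norm_nonneg v).lt_or_eq with hz | hz
    · have h7 : ‖v‖ * ‖v‖ ≤ (Real.sqrt B * Real.sqrt (∑ i ∈ F, ‖g i‖ ^ 2)) * ‖v‖ := by
        nlinarith [h5]
      exact le_of_mul_le_mul_right h7 hz
    · rw [← hz]
      positivity
  -- square-summability of lp coefficients
  have hgsummable : ∀ g : lp G 2, Summable fun i => ‖g i‖ ^ 2 := by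
    intro g
    have h := (lp.memℓp g).summable (by norm_num : 0 < (2 : ℝ≥0∞).toReal)
    have : (fun i => ‖g i‖ ^ (2 : ℝ≥0∞).toReal) = fun i => ‖g i‖ ^ 2 := by
      funext i
      rw [show (2 : ℝ≥0∞).toReal = (2 : ℝ) from by norm_num]
      exact Real.rpow_two _
    rwa [this] at h
  have hnorm : ∀ g : lp G 2, ∑' i, ‖g i‖ ^ 2 = ‖g‖ ^ 2 := by
    intro g
    have h := lp.norm_rpow_eq_tsum (p := 2) (by norm_num) g
    have h2 : (fun i => ‖g i‖ ^ (2 : ℝ≥0∞).toReal) = fun i => ‖g i‖ ^ 2 := by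
      funext i
      rw [show (2 : ℝ≥0∞).toReal = (2 : ℝ) from by norm_num]
      exact Real.rpow_two _
    rw [h2] at h
    rw [← h]
    rw [show (2 : ℝ≥0∞).toReal = (2 : ℝ) from by norm_num]
    exact Real.rpow_two _
  -- summability of the synthesis series
  have hsummG : ∀ g : lp G 2, Summable fun i => R ((Λ i).adjoint (g i)) := by
    intro g
    rw [summable_iff_vanishing_norm]
    intro ε hε
    have hδpos : 0 < (ε / (Real.sqrt B + 1)) ^ 2 := by positivity
    obtain ⟨s, hs⟩ := summable_iff_vanishing_norm.mp (hgsummable g)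
      ((ε / (Real.sqrt B + 1)) ^ 2) hδpos
    refine ⟨s, fun t ht => ?_⟩
    have h1 := hs t ht
    have h2 : ∑ i ∈ t, ‖g i‖ ^ 2 < (ε / (Real.sqrt B + 1)) ^ 2 := by
      have habs : |∑ i ∈ t, ‖g i‖ ^ 2| = ∑ i ∈ t, ‖g i‖ ^ 2 :=
        abs_of_nonneg (Finset.sum_nonneg fun i _ => by positivity)
      rw [Real.norm_eq_abs, habs] at h1
      exact h1
    have h3 : Real.sqrt (∑ i ∈ t, ‖g i‖ ^ 2) ≤ ε / (Real.sqrt B + 1) := by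
      rw [show ε / (Real.sqrt B + 1) = Real.sqrt ((ε / (Real.sqrt B + 1)) ^ 2) from
        (Real.sqrt_sq (by positivity)).symm]
      exact Real.sqrt_le_sqrt h2.le
    calc ‖∑ i ∈ t, R ((Λ i).adjoint (g i))‖
        ≤ Real.sqrt B * Real.sqrt (∑ i ∈ t, ‖g i‖ ^ 2) := finbound (fun i => g i) t
    _ ≤ Real.sqrt B * (ε / (Real.sqrt B + 1)) :=
        mul_le_mul_of_nonneg_left h3 (Real.sqrt_nonneg B)
    _ < ε := by
        rw [mul_div_assoc', div_lt_iff₀ (by positivity)]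
        nlinarith [Real.sqrt_nonneg B, hε]
  have hTsum : ∀ g : lp G 2,
      HasSum (fun i => R ((Λ i).adjoint (g i))) (∑' i, R ((Λ i).adjoint (g i))) :=
    fun g => (hsummG g).hasSum
  let Tlin : lp G 2 →ₗ[ℝ] H :=
    { toFun := fun g => ∑' i, R ((Λ i).adjoint (g i))
      map_add' := fun g1 g2 => by
        have h1 := (hTsum g1).add (hTsum g2)
        have h2 : (fun i => R ((Λ i).adjoint (g1 i)) + R ((Λ i).adjoint (g2 i)))
            = fun i => R ((Λ i).adjoint ((g1 + g2) i)) := by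
          funext i
          have hcoe : (g1 + g2) i = g1 i + g2 i := rfl
          rw [hcoe, map_add, map_add]
        rw [h2] at h1
        exact HasSum.unique (hTsum (g1 + g2)) h1
      map_smul' := fun r g => by
        have h1 := (hTsum g).const_smul r
        have h2 : (fun i => r • R ((Λ i).adjoint (g i)))
            = fun i => R ((Λ i).adjoint ((r • g) i)) := by
          funext i
          have hcoe : (r • g) i = r • g i := rfl
          rw [hcoe, map_smul, map_smul]
        rw [h2] at h1
        simpa using HasSum.unique (hTsum (r • g)) h1 }
  have hbound : ∀ g : lp G 2, ‖Tlin g‖ ≤ Real.sqrt B * ‖g‖ := by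
    intro g
    refine le_of_tendsto (Filter.Tendsto.norm (hTsum g)) (Filter.Eventually.of_forall fun F => ?_)
    calc ‖∑ i ∈ F, R ((Λ i).adjoint (g i))‖
        ≤ Real.sqrt B * Real.sqrt (∑ i ∈ F, ‖g i‖ ^ 2) := finbound (fun i => g i) F
    _ ≤ Real.sqrt B * Real.sqrt (∑' i, ‖g i‖ ^ 2) :=
        mul_le_mul_of_nonneg_left
          (Real.sqrt_le_sqrt (Summable.sum_le_tsum F (fun i _ => by positivity) (hgsummable g)))
          (Real.sqrt_nonneg B)
    _ = Real.sqrt B * ‖g‖ := by rw [hnorm g, Real.sqrt_sq (norm_nonneg g)]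
  refine ⟨Tlin.mkContinuous (Real.sqrt B) hbound, fun g => hTsum g, ?_⟩
  exact Tlin.mkContinuous_norm_le (Real.sqrt_nonneg B) hbound
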